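/- Let p be an odd prime and P a finite nonabelian metacyclic p-group whose commutator subgroup [P,P] has order p. Then the subgroup Ω(P) generated by the elements of order dividing p is isomorphic to C_p × C_p. -/

import Mathlib

open scoped commutatorElement

section helpers
variable {G : Type*} [Group G]

private lemma aux_semicomm (a b c : G) (hc : ∀ g : G, c * g = g * c)
    (h : b * a = a * b * c) : ∀ n : ℕ, b ^ n * a = a * b ^ n * c ^ n := by
  intro n
  induction n with
  | zero => simp
  | succ n ih =>
    have hcb : c * b ^ n = b ^ n * c := hc _
    calc b ^ (n+1) * a = b * (b ^ n * a) := by rw [pow_succ', mul_assoc]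
      _ = b * (a * b ^ n * c ^ n) := by rw [ih]
      _ = (b * a) * b ^ n * c ^ n := by simp [mul_assoc]
      _ = (a * b * c) * b ^ n * c ^ n := by rw [h]
      _ = (a * b) * (c * b ^ n) * c ^ n := by simp [mul_assoc]
      _ = (a * b) * (b ^ n * c) * c ^ n := by rw [hcb]
      _ = a * (b * b ^ n) * (c * c ^ n) := by simp [mul_assoc]
      _ = a * b ^ (n+1) * c ^ (n+1) := by rw [← pow_succ', ← pow_succ']

private lemma aux_mul_pow (a b c : G) (hc : ∀ g : G, c * g = g * c)
    (h : b * a = a * b * c) : ∀ n : ℕ, (a * b) ^ n = a ^ n * b ^ n * c ^ (n.choose 2) := by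
  intro n
  induction n with
  | zero => simp
  | succ n ih =>
    have hck : ∀ (k : ℕ) (g : G), c ^ k * g = g * c ^ k := fun k g => (Commute.pow_left (hc g) k)
    calc (a * b) ^ (n+1) = (a * b) ^ n * (a * b) := pow_succ _ _
      _ = a ^ n * b ^ n * c ^ (n.choose 2) * (a * b) := by rw [ih]
      _ = a ^ n * (b ^ n * a) * b * c ^ (n.choose 2) := by
          simp only [mul_assoc]
          rw [hck (n.choose 2) (a * b)]
          simp [mul_assoc]
      _ = a ^ n * (a * b ^ n * c ^ n) * b * c ^ (n.choose 2) := by rw [aux_semicomm a b c hc h n]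
      _ = a ^ (n+1) * b ^ n * (c ^ n * b) * c ^ (n.choose 2) := by
          rw [pow_succ a n]; simp [mul_assoc]
      _ = a ^ (n+1) * b ^ n * (b * c ^ n) * c ^ (n.choose 2) := by rw [hck n b]
      _ = a ^ (n+1) * (b ^ n * b) * (c ^ n * c ^ (n.choose 2)) := by simp [mul_assoc]
      _ = a ^ (n+1) * b ^ (n+1) * c ^ ((n+1).choose 2) := by
          rw [← pow_succ, ← pow_add]
          congr 1
          rw [Nat.choose_succ_succ n 1, Nat.choose_one_right, Nat.add_comm]

end helpers

private lemma aux_central {P : Type*} [Group P] [Finite P] {p : ℕ} (hp : p.Prime)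
    (hpgrp : IsPGroup p P) (D : Subgroup P) [D.Normal] (hD : Nat.card D = p) :
    ∀ d ∈ D, ∀ g : P, g * d = d * g := by
  haveI : Fact p.Prime := ⟨hp⟩
  have hpc : IsPGroup p (ConjAct P) := hpgrp
  have hmod := hpc.card_modEq_card_fixedPoints (↥D)
  rw [hD] at hmod
  have hdvd : p ∣ Nat.card (MulAction.fixedPoints (ConjAct P) ↥D) :=
    (Nat.modEq_zero_iff_dvd).mp (((Nat.modEq_zero_iff_dvd).mpr dvd_rfl).symm.trans hmod).symm
  have hne : (1 : ↥D) ∈ MulAction.fixedPoints (ConjAct P) ↥D :=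
    MulAction.mem_fixedPoints.mpr fun m => smul_one m
  haveI : Nonempty (MulAction.fixedPoints (ConjAct P) ↥D) := ⟨⟨1, hne⟩⟩
  have hle : Nat.card (MulAction.fixedPoints (ConjAct P) ↥D) ≤ p := by
    rw [← hD]
    exact Nat.card_le_card_of_injective _ Subtype.val_injective
  have hcardfix : Nat.card (MulAction.fixedPoints (ConjAct P) ↥D) = p :=
    le_antisymm hle (Nat.le_of_dvd Nat.card_pos hdvd)
  have hsurj : Function.Surjective
      (Subtype.val : (MulAction.fixedPoints (ConjAct P) ↥D) → ↥D) := by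
    have : Function.Bijective
        (Subtype.val : (MulAction.fixedPoints (ConjAct P) ↥D) → ↥D) := by
      haveI := Fintype.ofFinite (↥D)
      haveI := Fintype.ofFinite (MulAction.fixedPoints (ConjAct P) ↥D)
      rw [Fintype.bijective_iff_injective_and_card]
      refine ⟨Subtype.val_injective, ?_⟩
      rw [← Nat.card_eq_fintype_card, ← Nat.card_eq_fintype_card, hcardfix, hD]
    exact this.surjective
  intro d hd g
  obtain ⟨⟨d', hfix⟩, hval⟩ := hsurj ⟨d, hd⟩
  have := MulAction.mem_fixedPoints.mp hfix (ConjAct.toConjAct g)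
  have hval2 : ((ConjAct.toConjAct g • d' : ↥D) : P) = (d' : P) := by rw [this]
  rw [ConjAct.Subgroup.val_conj_smul, ConjAct.toConjAct_smul] at hval2
  have hdd : (d' : P) = d := Subtype.ext_iff.mp hval
  rw [hdd] at hval2
  exact mul_inv_eq_iff_eq_mul.mp hval2

private lemma aux_card_le {C : Type*} [Group C] [Finite C] [IsCyclic C] {p : ℕ} (hp : 0 < p) :
    Nat.card {a : C // a ^ p = 1} ≤ p := by
  haveI := Fintype.ofFinite C
  classical
  rw [Nat.card_eq_fintype_card]
  rw [Fintype.card_subtype]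
  exact IsCyclic.card_pow_eq_one_le hp


private lemma aux_add {A : Type*} [AddCommGroup A] [Finite A] {p : ℕ} (hp : p.Prime)
    (hcard : Nat.card A = p ^ 2) (hexp : ∀ a : A, p • a = 0) :
    Nonempty (A ≃+ (ZMod p) × (ZMod p)) := by
  haveI : Fact p.Prime := ⟨hp⟩
  haveI : Module (ZMod p) A := AddCommGroup.zmodModule hexp
  haveI : Module.Finite (ZMod p) A := Module.Finite.of_finite (R := ZMod p) (M := A)
  have hfr : Module.finrank (ZMod p) A = 2 := by
    haveI := Fintype.ofFinite A
    have hc := Module.card_eq_pow_finrank (K := ZMod p) (V := A)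
    rw [ZMod.card] at hc
    have hc2 : Fintype.card A = p ^ 2 := by
      rw [← Nat.card_eq_fintype_card]; exact hcard
    rw [hc2] at hc
    exact (Nat.pow_right_injective hp.two_le hc.symm)
  let bas := Module.finBasisOfFinrankEq (ZMod p) A hfr
  let e2 := LinearEquiv.piFinTwo (ZMod p) (fun _ : Fin 2 => ZMod p)
  exact ⟨(bas.equivFun.trans e2).toAddEquiv⟩

private lemma aux_elem_ab {K : Type*} [Group K] [Finite K] {p : ℕ} (hp : p.Prime)
    (hcomm : ∀ a b : K, a * b = b * a) (hcard : Nat.card K = p ^ 2)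
    (hexp : ∀ a : K, a ^ p = 1) :
    Nonempty (K ≃* Multiplicative (ZMod p) × Multiplicative (ZMod p)) := by
  letI : CommGroup K := { (inferInstance : Group K) with mul_comm := hcomm }
  have hexp' : ∀ a : Additive K, p • a = 0 := by
    intro x
    show Additive.ofMul (Additive.toMul x ^ p) = 0
    rw [hexp]
    rfl
  have hcard' : Nat.card (Additive K) = p ^ 2 := hcard
  obtain ⟨e⟩ := aux_add hp hcard' hexp'
  exact ⟨(AddEquiv.toMultiplicativeRight e).trans
    (MulEquiv.prodMultiplicative (ZMod p) (ZMod p))⟩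

theorem stmt_13 {P : Type*} [Group P] [Finite P] (p : ℕ) (hp : p.Prime)
    (hodd : Odd p) (hpgrp : IsPGroup p P)
    (hmeta : ∃ (N : Subgroup P) (_ : N.Normal), IsCyclic N ∧ IsCyclic (P ⧸ N))
    (hnonab : ∃ x y : P, x * y ≠ y * x)
    (hcomm : Nat.card (commutator P) = p) :
    Nonempty ((Subgroup.closure {x : P | x ^ p = 1}) ≃*
      Multiplicative (ZMod p) × Multiplicative (ZMod p)) := by
  obtain ⟨N, hNnorm, hNcyc, hQcyc⟩ := hmeta
  haveI := hNnorm
  haveI : Fact p.Prime := ⟨hp⟩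
  obtain ⟨kk, hpk⟩ := hodd
  -- no group covered by a single cyclic subgroup
  have habs : ∀ y : P, (∀ g : P, g ∈ Subgroup.zpowers y) → False := by
    intro y hy
    obtain ⟨a, b, hab⟩ := hnonab
    obtain ⟨i, hi⟩ := Subgroup.mem_zpowers_iff.mp (hy a)
    obtain ⟨j, hj⟩ := Subgroup.mem_zpowers_iff.mp (hy b)
    exact hab (by rw [← hi, ← hj, ← zpow_add, ← zpow_add, add_comm])
  -- commutator facts
  have hcentral : ∀ d ∈ commutator P, ∀ g : P, g * d = d * g :=
    aux_central hp hpgrp (commutator P) hcomm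
  have hDexp : ∀ d ∈ commutator P, d ^ p = 1 := by
    intro d hd
    have h1 : (⟨d, hd⟩ : commutator P) ^ p = 1 := by
      rw [← hcomm]; exact pow_card_eq_one'
    simpa [Subtype.ext_iff] using h1
  have hpowmul : ∀ a b : P, (a * b) ^ p = a ^ p * b ^ p := by
    intro a b
    have hcD : b⁻¹ * a⁻¹ * b * a ∈ commutator P := by
      have : b⁻¹ * a⁻¹ * b * a = ⁅b⁻¹, a⁻¹⁆ := by
        simp [commutatorElement_def, mul_assoc]
      rw [this, commutator_def]
      exact Subgroup.commutator_mem_commutator (Subgroup.mem_top _) (Subgroup.mem_top _)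
    set c := b⁻¹ * a⁻¹ * b * a with hc
    have hcc : ∀ g : P, c * g = g * c := fun g => (hcentral c hcD g).symm
    have hba : b * a = a * b * c := by rw [hc]; group
    rw [aux_mul_pow a b c hcc hba p]
    have hchoose : p.choose 2 = p * kk := by
      subst hpk
      rw [Nat.choose_two_right]
      have h2 : 2 * kk + 1 - 1 = 2 * kk := by omega
      rw [h2, show (2 * kk + 1) * (2 * kk) = 2 * ((2 * kk + 1) * kk) by ring]
      exact Nat.mul_div_cancel_left _ (by norm_num)
    rw [hchoose, pow_mul, hDexp c hcD, one_pow, mul_one]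
  -- the subgroup K with carrier {x | x ^ p = 1}
  let K : Subgroup P :=
    { carrier := {x : P | x ^ p = 1}
      one_mem' := one_pow p
      mul_mem' := fun {a b} ha hb => by
        simp only [Set.mem_setOf_eq] at *
        rw [hpowmul a b, ha, hb, mul_one]
      inv_mem' := fun {a} ha => by
        simp only [Set.mem_setOf_eq] at *
        rw [inv_pow, ha, inv_one] }
  have hKclosure : Subgroup.closure {x : P | x ^ p = 1} = K := Subgroup.closure_eq K
  rw [hKclosure]
  -- N is proper and nontrivial
  have hNbot : N ≠ ⊥ := by
    intro h
    subst h
    haveI : IsCyclic P := isCyclic_of_surjective (QuotientGroup.quotientBot (G := P)).toMonoidHom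
      (QuotientGroup.quotientBot (G := P)).surjective
    obtain ⟨y, hy⟩ := IsCyclic.exists_generator (α := P)
    exact habs y hy
  have hNtop : N ≠ ⊤ := by
    intro h
    subst h
    haveI : IsCyclic P := isCyclic_of_surjective (Subgroup.topEquiv (G := P)).toMonoidHom
      (Subgroup.topEquiv (G := P)).surjective
    obtain ⟨y, hy⟩ := IsCyclic.exists_generator (α := P)
    exact habs y hy
  -- generators
  obtain ⟨xg, hxg⟩ := IsCyclic.exists_generator (α := ↥N)
  obtain ⟨qg, hqg⟩ := IsCyclic.exists_generator (α := P ⧸ N)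
  obtain ⟨km, hkm⟩ := IsPGroup.iff_card.mp (hpgrp.to_subgroup N)
  obtain ⟨ks, hks⟩ := IsPGroup.iff_card.mp (hpgrp.to_quotient N)
  have hkm1 : 1 ≤ km := by
    haveI : Nontrivial ↥N := (Subgroup.nontrivial_iff_ne_bot N).mpr hNbot
    have h1 := Finite.one_lt_card (α := ↥N)
    rw [hkm] at h1
    by_contra h
    have : km = 0 := by omega
    subst this
    simp at h1
  have hks1 : 1 ≤ ks := by
    haveI : Nontrivial (P ⧸ N) := by
      rcases subsingleton_or_nontrivial (P ⧸ N) with hsub | hnt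
      · exact absurd ((Subgroup.eq_top_iff' _).mpr (fun x => (QuotientGroup.eq_one_iff x).mp
          (Subsingleton.elim _ _))) hNtop
      · exact hnt
    have h1 := Finite.one_lt_card (α := P ⧸ N)
    rw [hks] at h1
    by_contra h
    have : ks = 0 := by omega
    subst this
    simp at h1
  -- orders of the generators
  have hxgtop : Subgroup.zpowers xg = ⊤ := (Subgroup.eq_top_iff' _).mpr hxg
  have hqgtop : Subgroup.zpowers qg = ⊤ := (Subgroup.eq_top_iff' _).mpr hqg
  have hordxg : orderOf xg = p ^ km := by
    rw [← Nat.card_zpowers, hxgtop, Subgroup.card_top, hkm]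
  have hordqg : orderOf qg = p ^ ks := by
    rw [← Nat.card_zpowers, hqgtop, Subgroup.card_top, hks]
  obtain ⟨y, hy⟩ := QuotientGroup.mk_surjective (s := N) qg
  set e : ℕ := p ^ (ks - 1) with he
  set z : P := y ^ e with hz
  have hzbar : ((z : P ⧸ N)) = qg ^ e := by
    rw [hz, ← hy]
    exact (QuotientGroup.mk_pow N y e)
  have hzpN : z ^ p ∈ N := by
    rw [← QuotientGroup.eq_one_iff]
    have : ((z ^ p : P) : P ⧸ N) = (qg ^ e) ^ p := by
      rw [← hzbar]; exact (QuotientGroup.mk_pow N z p)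
    rw [this, ← pow_mul]
    have : e * p = p ^ ks := by rw [he, ← pow_succ]; congr 1; omega
    rw [this, ← hordqg]
    exact pow_orderOf_eq_one qg
  have hzN : z ∉ N := by
    intro hmem
    have h1 : (qg : P ⧸ N) ^ e = 1 := by rw [← hzbar, QuotientGroup.eq_one_iff]; exact hmem
    have h2 : orderOf qg ∣ e := orderOf_dvd_of_pow_eq_one h1
    rw [hordqg, he] at h2
    have : p ^ ks ≤ p ^ (ks - 1) := Nat.le_of_dvd (pow_pos hp.pos _) h2
    have hlt : p ^ (ks - 1) < p ^ ks := Nat.pow_lt_pow_right hp.one_lt (by omega)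
    omega
  -- z ^ p as an element of N, exponent t
  obtain ⟨kz, hkz⟩ := Subgroup.mem_zpowers_iff.mp (hxg ⟨z ^ p, hzpN⟩)
  set t : ℕ := (kz % ((p ^ km : ℕ) : ℤ)).toNat with ht
  have hxt : xg ^ t = (⟨z ^ p, hzpN⟩ : ↥N) := by
    have hmod : xg ^ (kz % ((p ^ km : ℕ) : ℤ)) = xg ^ kz := by
      rw [← hordxg]; exact zpow_mod_orderOf xg kz
    have hnonneg : 0 ≤ kz % ((p ^ km : ℕ) : ℤ) :=
      Int.emod_nonneg kz (by exact_mod_cast (pow_pos hp.pos km).ne')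
    rw [← hkz, ← hmod, ht, ← zpow_natCast, Int.toNat_of_nonneg hnonneg]
  -- main case analysis
  -- exponent p on K
  have hKexp : ∀ b : ↥K, b ^ p = 1 := by
    intro b
    apply Subtype.ext
    show ((b ^ p : ↥K) : P) = 1
    rw [SubgroupClass.coe_pow]
    exact b.2
  by_cases hpt : p ∣ t
  · obtain ⟨u, hu⟩ := hpt
    have hXN : ((xg : P) : P) ∈ N := xg.2
    set X : P := (xg : P) with hX
    set w : P := z * (X ^ u)⁻¹ with hw
    have hzpX : z ^ p = X ^ t := by
      have h1 := congrArg (Subtype.val : ↥N → P) hxt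
      rw [SubgroupClass.coe_pow] at h1
      exact h1.symm
    have hwp : w ^ p = 1 := by
      have h1 : w ^ p = z ^ p * ((X ^ u)⁻¹) ^ p := by rw [hw]; exact hpowmul _ _
      rw [h1, hzpX, hu, inv_pow, ← pow_mul, mul_comm u p, mul_inv_cancel]
    have hwK : w ∈ K := hwp
    have hwN : w ∉ N := by
      intro hmem
      apply hzN
      have hzw : z = w * X ^ u := by rw [hw]; group
      rw [hzw]
      exact N.mul_mem hmem (N.pow_mem hXN u)
    -- commutator is inside N
    have hDleN : commutator P ≤ N := by
      rw [commutator_def, Subgroup.commutator_le]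
      intro g1 _ g2 _
      rw [← QuotientGroup.eq_one_iff]
      have hmapc : ((⁅g1, g2⁆ : P) : P ⧸ N) = ⁅(g1 : P ⧸ N), (g2 : P ⧸ N)⁆ :=
        map_commutatorElement (QuotientGroup.mk' N) g1 g2
      rw [hmapc, commutatorElement_eq_one_iff_mul_comm]
      letI : CommGroup (P ⧸ N) := IsCyclic.commGroup
      exact mul_comm _ _
    -- a nontrivial element of the commutator subgroup
    haveI hDnontriv : Nontrivial ↥(commutator P) :=
      Finite.one_lt_card_iff_nontrivial.mp (by rw [hcomm]; exact hp.one_lt)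
    obtain ⟨dd, hddne⟩ := exists_ne (1 : ↥(commutator P))
    have hdne : (dd : P) ≠ 1 := fun h => hddne (Subtype.ext h)
    have hdK : (dd : P) ∈ K := hDexp _ dd.2
    have hdN : (dd : P) ∈ N := hDleN dd.2
    -- the reduction homomorphism
    set f : ↥K →* P ⧸ N := (QuotientGroup.mk' N).comp K.subtype with hf
    have hker_le : Nat.card f.ker ≤ p := by
      have key : ∀ a : f.ker, ((a : ↥K) : P) ∈ N := by
        intro a
        have h2 := a.2
        rw [MonoidHom.mem_ker] at h2
        exact (QuotientGroup.eq_one_iff _).mp h2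
      have key2 : ∀ a : f.ker, (⟨((a : ↥K) : P), key a⟩ : ↥N) ^ p = 1 := by
        intro a
        apply Subtype.ext
        rw [SubgroupClass.coe_pow]
        exact (a : ↥K).2
      have hFinj : Function.Injective
          (fun a : f.ker => (⟨⟨((a : ↥K) : P), key a⟩, key2 a⟩ : {a : ↥N // a ^ p = 1})) := by
        intro a b hab
        apply Subtype.ext; apply Subtype.ext
        have := congrArg (fun r : {a : ↥N // a ^ p = 1} => ((r : ↥N) : P)) hab
        simpa using this
      calc Nat.card f.ker ≤ Nat.card {a : ↥N // a ^ p = 1} :=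
            Nat.card_le_card_of_injective _ hFinj
        _ ≤ p := aux_card_le hp.pos
    have hrange_le : Nat.card f.range ≤ p := by
      have key : ∀ a : f.range, (a : P ⧸ N) ^ p = 1 := by
        rintro ⟨a, b, rfl⟩
        show (f b) ^ p = 1
        rw [← map_pow, hKexp b, map_one]
      have hFinj : Function.Injective
          (fun a : f.range => (⟨(a : P ⧸ N), key a⟩ : {a : P ⧸ N // a ^ p = 1})) := by
        intro a b hab
        apply Subtype.ext
        simpa using congrArg (fun r : {a : P ⧸ N // a ^ p = 1} => (r : P ⧸ N)) hab
      calc Nat.card f.range ≤ Nat.card {a : P ⧸ N // a ^ p = 1} :=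
            Nat.card_le_card_of_injective _ hFinj
        _ ≤ p := aux_card_le hp.pos
    -- the kernel has order exactly p
    have hdker : (⟨(dd : P), hdK⟩ : ↥K) ∈ f.ker := by
      rw [MonoidHom.mem_ker]
      exact (QuotientGroup.eq_one_iff _).mpr hdN
    haveI : Nontrivial f.ker := by
      apply nontrivial_of_ne (⟨⟨(dd : P), hdK⟩, hdker⟩ : f.ker) 1
      intro h
      exact hdne (by simpa using congrArg (fun r : f.ker => ((r : ↥K) : P)) h)
    obtain ⟨nk, hnk⟩ := IsPGroup.iff_card.mp ((hpgrp.to_subgroup K).to_subgroup f.ker)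
    have hker_eq : Nat.card f.ker = p := by
      have h1 : 1 < Nat.card f.ker := Finite.one_lt_card
      rw [hnk] at h1 hker_le ⊢
      have hnk0 : nk ≠ 0 := by rintro rfl; simp at h1
      have hnk1 : nk ≤ 1 := by
        have h2 : p ^ nk ≤ p ^ 1 := by rw [pow_one]; exact hker_le
        exact (Nat.pow_le_pow_iff_right hp.one_lt).mp h2
      have : nk = 1 := by omega
      rw [this, pow_one]
    -- the range has order exactly p
    have hwrange : ((w : P ⧸ N)) ∈ f.range := ⟨⟨w, hwK⟩, rfl⟩
    haveI : Nontrivial f.range := by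
      apply nontrivial_of_ne (⟨(w : P ⧸ N), hwrange⟩ : f.range) 1
      intro h
      have : ((w : P ⧸ N)) = 1 := by simpa using congrArg (fun r : f.range => (r : P ⧸ N)) h
      exact hwN ((QuotientGroup.eq_one_iff _).mp this)
    obtain ⟨nr, hnr⟩ := IsPGroup.iff_card.mp ((hpgrp.to_quotient N).to_subgroup f.range)
    have hrange_eq : Nat.card f.range = p := by
      have h1 : 1 < Nat.card f.range := Finite.one_lt_card
      rw [hnr] at h1 hrange_le ⊢
      have hnr0 : nr ≠ 0 := by rintro rfl; simp at h1
      have hnr1 : nr ≤ 1 := by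
        have h2 : p ^ nr ≤ p ^ 1 := by rw [pow_one]; exact hrange_le
        exact (Nat.pow_le_pow_iff_right hp.one_lt).mp h2
      have : nr = 1 := by omega
      rw [this, pow_one]
    -- K has order p ^ 2
    have hKcard : Nat.card ↥K = p ^ 2 := by
      have h1 := Subgroup.card_eq_card_quotient_mul_card_subgroup f.ker
      have h2 : Nat.card (↥K ⧸ f.ker) = Nat.card f.range :=
        Nat.card_congr (QuotientGroup.quotientKerEquivRange f).toEquiv
      rw [h2, hker_eq, hrange_eq] at h1
      rw [h1]; ring
    -- build the isomorphism
    exact aux_elem_ab hp (IsPGroup.commutative_of_card_eq_prime_sq (p := p) hKcard)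
      hKcard hKexp
  · -- coprime case: P is cyclic, contradiction
    exfalso
    have hcop : Nat.Coprime (orderOf xg) t := by
      rw [hordxg]
      exact Nat.Coprime.pow_left km ((Nat.Prime.coprime_iff_not_dvd hp).mpr hpt)
    have hordt : orderOf (xg ^ t) = p ^ km := by
      rw [hcop.orderOf_pow, hordxg]
    have htop : Subgroup.zpowers (xg ^ t) = ⊤ := by
      apply Subgroup.eq_top_of_card_eq
      rw [Nat.card_zpowers, hordt, hkm]
    apply habs y
    intro g
    obtain ⟨j, hj⟩ := Subgroup.mem_zpowers_iff.mp (hqg ((g : P ⧸ N)))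
    have hgy : (↑(g * (y ^ j)⁻¹) : P ⧸ N) = 1 := by
      rw [QuotientGroup.mk_mul, QuotientGroup.mk_inv, ← hj, ← hy]
      rw [← QuotientGroup.mk_zpow]
      simp
    have hgN : g * (y ^ j)⁻¹ ∈ N := (QuotientGroup.eq_one_iff _).mp hgy
    have : (⟨g * (y ^ j)⁻¹, hgN⟩ : ↥N) ∈ Subgroup.zpowers (xg ^ t) := htop ▸ Subgroup.mem_top _
    obtain ⟨i, hi⟩ := Subgroup.mem_zpowers_iff.mp this
    rw [hxt] at hi
    have hival : (z ^ p : P) ^ i = g * (y ^ j)⁻¹ := by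
      have := congrArg (Subtype.val : ↥N → P) hi
      simpa using this
    refine Subgroup.mem_zpowers_iff.mpr ⟨((e * p : ℕ) : ℤ) * i + j, ?_⟩
    rw [zpow_add]
    have hzp : (z : P) ^ p = y ^ (e * p) := by rw [hz, ← pow_mul]
    have hzpow : y ^ (((e * p : ℕ) : ℤ) * i) = ((z : P) ^ p) ^ i := by
      rw [hzp, zpow_mul, zpow_natCast]
    rw [hzpow, hival]
    group
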